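/- Let ψ : [1,∞) → ℝ be positive, convex, differentiable with ψ'(t) < 0 for all t ≥ 1, and ψ(t) → 0 as t → ∞; set λ(t) = ψ(t)/|ψ'(t)| and α(t) = ψ(t)/(t·|ψ'(t)|). Assume λ is nondecreasing and α is nonincreasing on [1,∞). Then for every n ∈ ℕ (n ≥ 1) with α(n) ≤ 1/4, the integral ∫_n^∞ t·ψ(t) dt is finite and n·ψ(n)·λ(n) ≤ ∫_n^∞ t·ψ(t) dt ≤ n·ψ(n)·λ(n)·(1 + 4·α(n)). -/

import Mathlib

open MeasureTheory Real Filter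

set_option maxHeartbeats 1000000 in
/-- Under the `𝔐`-type conditions on `ψ`, with `λ(t) = ψ(t)/|ψ'(t)|`
nondecreasing and `α(t) = ψ(t)/(t|ψ'(t)|)` nonincreasing, if `n ≥ 1` and `α(n) ≤ 1/4` then
`∫_n^∞ tψ(t) dt` is finite and `nψ(n)λ(n) ≤ ∫_n^∞ tψ(t) dt ≤ nψ(n)λ(n)(1 + 4α(n))`. -/
theorem integral_t_psi_two_sided (ψ ψ' : ℝ → ℝ)
    (hpos : ∀ t, 1 ≤ t → 0 < ψ t)
    (hconv : ConvexOn ℝ (Set.Ici (1 : ℝ)) ψ)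
    (hderiv : ∀ t, 1 ≤ t → HasDerivAt ψ (ψ' t) t)
    (hneg : ∀ t, 1 ≤ t → ψ' t < 0)
    (hlim : Filter.Tendsto ψ Filter.atTop (nhds 0))
    (hlam_mono : ∀ s t, 1 ≤ s → s ≤ t → ψ s / |ψ' s| ≤ ψ t / |ψ' t|)
    (halp_anti : ∀ s t, 1 ≤ s → s ≤ t → ψ t / (t * |ψ' t|) ≤ ψ s / (s * |ψ' s|))
    (n : ℕ) (hn : 1 ≤ n) (hα : ψ (n : ℝ) / ((n : ℝ) * |ψ' (n : ℝ)|) ≤ 1 / 4) :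
    MeasureTheory.IntegrableOn (fun t => t * ψ t) (Set.Ici (n : ℝ)) ∧
      (n : ℝ) * ψ (n : ℝ) * (ψ (n : ℝ) / |ψ' (n : ℝ)|) ≤
        (∫ t in Set.Ici (n : ℝ), t * ψ t) ∧
      (∫ t in Set.Ici (n : ℝ), t * ψ t) ≤
        (n : ℝ) * ψ (n : ℝ) * (ψ (n : ℝ) / |ψ' (n : ℝ)|) *
          (1 + 4 * (ψ (n : ℝ) / ((n : ℝ) * |ψ' (n : ℝ)|))) := by
  set N : ℝ := (n : ℝ) with hNdef
  have hN1 : (1 : ℝ) ≤ N := by rw [hNdef]; exact_mod_cast hn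
  have hN0 : (0 : ℝ) < N := lt_of_lt_of_le zero_lt_one hN1
  have hψN : 0 < ψ N := hpos N hN1
  have hdN : 0 < |ψ' N| := abs_pos.mpr (hneg N hN1).ne
  set L : ℝ := ψ N / |ψ' N| with hLdef
  set a : ℝ := ψ N / (N * |ψ' N|) with hadef
  have hL0 : 0 < L := div_pos hψN hdN
  have ha0 : 0 < a := div_pos hψN (mul_pos hN0 hdN)
  have hLa : L = N * a := by
    rw [hLdef, hadef]; field_simp
  set β : ℝ := 1 / a with hβdef
  have haβ : a * β = 1 := by
    rw [hβdef]; exact mul_one_div_cancel ha0.ne'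
  have hβ4 : 4 ≤ β := by
    rw [hβdef, le_div_iff₀ ha0]
    linarith [hα]
  clear_value N L a β
  -- basic pointwise facts
  have hψt : ∀ t, N ≤ t → 0 < ψ t := fun t ht => hpos t (hN1.trans ht)
  have habs : ∀ t, N ≤ t → |ψ' t| = -ψ' t :=
    fun t ht => abs_of_neg (hneg t (hN1.trans ht))
  have hdt : ∀ t, N ≤ t → 0 < |ψ' t| :=
    fun t ht => abs_pos.mpr (hneg t (hN1.trans ht)).ne
  -- key inequality from α antitone : β ψ t + t ψ' t ≤ 0
  have keyAlp : ∀ t, N ≤ t → β * ψ t + t * ψ' t ≤ 0 := by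
    intro t ht
    have h1 := halp_anti N t hN1 ht
    have ht0 : (0 : ℝ) < t := lt_of_lt_of_le hN0 ht
    have hpos' : 0 < t * |ψ' t| := mul_pos ht0 (hdt t ht)
    rw [div_le_iff₀ hpos'] at h1
    rw [habs t ht, ← hadef] at h1
    have h2 : β * ψ t ≤ β * (a * (t * -ψ' t)) :=
      mul_le_mul_of_nonneg_left h1 (by positivity)
    have h3 : β * (a * (t * -ψ' t)) = t * -ψ' t := by
      have h4 : β * (a * (t * -ψ' t)) = (a * β) * (t * -ψ' t) := by ring
      rw [h4, haβ, one_mul]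
    nlinarith [h2, h3]
  -- key inequality from λ monotone : 0 ≤ ψ' t + ψ t / L
  have keyLam : ∀ t, N ≤ t → 0 ≤ ψ' t + ψ t / L := by
    intro t ht
    have h1 := hlam_mono N t hN1 ht
    rw [← hLdef] at h1
    have h2 : L * |ψ' t| ≤ ψ t := by
      rw [le_div_iff₀ (hdt t ht)] at h1
      linarith
    rw [habs t ht] at h2
    have : -ψ' t ≤ ψ t / L := by
      rw [le_div_iff₀ hL0]; nlinarith
    linarith
  -- upper pointwise bound: t^β * ψ t ≤ N^β * ψ N
  have hA : ∀ t, N ≤ t → t ^ β * ψ t ≤ N ^ β * ψ N := by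
    have hanti : AntitoneOn (fun t => t ^ β * ψ t) (Set.Ici N) := by
      have hder : ∀ t ∈ Set.Ici N, HasDerivAt (fun t => t ^ β * ψ t)
          (β * t ^ (β - 1) * ψ t + t ^ β * ψ' t) t := by
        intro t ht
        have ht0 : t ≠ 0 := (lt_of_lt_of_le hN0 ht).ne'
        exact (Real.hasDerivAt_rpow_const (Or.inl ht0)).mul (hderiv t (hN1.trans ht))
      apply antitoneOn_of_deriv_nonpos (convex_Ici N)
      · exact ContinuousOn.mono (fun t ht => ((hder t ht).continuousAt).continuousWithinAt)
          le_rfl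
      · intro t ht
        rw [interior_Ici] at ht
        exact (hder t (show N ≤ t from le_of_lt ht)).differentiableAt.differentiableWithinAt
      · intro t ht
        rw [interior_Ici] at ht
        have ht' : N ≤ t := le_of_lt ht
        have ht0 : (0 : ℝ) < t := lt_of_lt_of_le hN0 ht'
        have hd' := hder t ht'
        rw [hd'.deriv]
        have hfac : β * t ^ (β - 1) * ψ t + t ^ β * ψ' t
            = t ^ (β - 1) * (β * ψ t + t * ψ' t) := by
          have hpow : t ^ β = t ^ (β - 1) * t := by
            rw [← Real.rpow_add_one ht0.ne' (β - 1)]; ring_nf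
          rw [hpow]; ring
        rw [hfac]
        exact mul_nonpos_of_nonneg_of_nonpos (by positivity) (keyAlp t ht')
    intro t ht
    exact hanti Set.self_mem_Ici ht ht
  -- lower pointwise bound: ψ N * exp (-(t - N)/L) ≤ ψ t
  have hB : ∀ t, N ≤ t → ψ N * Real.exp (-((t - N) / L)) ≤ ψ t := by
    have hmono : MonotoneOn (fun t => ψ t * Real.exp ((t - N) / L)) (Set.Ici N) := by
      have hder : ∀ t ∈ Set.Ici N, HasDerivAt (fun t => ψ t * Real.exp ((t - N) / L))
          (ψ' t * Real.exp ((t - N) / L) + ψ t * (Real.exp ((t - N) / L) * (1 / L))) t := by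
        intro t ht
        have h1 : HasDerivAt (fun t : ℝ => Real.exp ((t - N) / L))
            (Real.exp ((t - N) / L) * (1 / L)) t :=
          (((hasDerivAt_id t).sub_const N).div_const L).exp
        exact (hderiv t (hN1.trans ht)).mul h1
      apply monotoneOn_of_deriv_nonneg (convex_Ici N)
      · exact fun t ht => ((hder t ht).continuousAt).continuousWithinAt
      · intro t ht
        rw [interior_Ici] at ht
        exact (hder t (show N ≤ t from le_of_lt ht)).differentiableAt.differentiableWithinAt
      · intro t ht
        rw [interior_Ici] at ht
        have ht' : N ≤ t := le_of_lt ht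
        rw [(hder t ht').deriv]
        have h2 := keyLam t ht'
        have h3 : ψ' t * Real.exp ((t - N) / L) + ψ t * (Real.exp ((t - N) / L) * (1 / L))
            = Real.exp ((t - N) / L) * (ψ' t + ψ t / L) := by ring
        rw [h3]
        positivity
    intro t ht
    have h1 := hmono Set.self_mem_Ici ht ht
    simp only [sub_self, zero_div, Real.exp_zero, mul_one] at h1
    have h2 : Real.exp (-((t - N) / L)) = (Real.exp ((t - N) / L))⁻¹ := Real.exp_neg _
    rw [h2, mul_inv_le_iff₀ (Real.exp_pos _)]
    linarith [h1]
  -- the majorant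
  set C : ℝ := N ^ β * ψ N with hCdef
  have hC0 : 0 < C := by rw [hCdef]; positivity
  clear_value C
  have hmaj : ∀ t, N ≤ t → t * ψ t ≤ C * t ^ (1 - β) := by
    intro t ht
    have ht0 : (0 : ℝ) < t := lt_of_lt_of_le hN0 ht
    have h1 := hA t ht
    have h2 : t ^ (1 - β) * (t ^ β * ψ t) ≤ t ^ (1 - β) * C :=
      mul_le_mul_of_nonneg_left h1 (by positivity)
    have h3 : t ^ (1 - β) * (t ^ β * ψ t) = t * ψ t := by
      rw [← mul_assoc, ← Real.rpow_add ht0]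
      norm_num
    rw [h3] at h2
    nlinarith [h2]
  have hint_maj : IntegrableOn (fun t => C * t ^ (1 - β)) (Set.Ioi N) := by
    exact (integrableOn_Ioi_rpow_of_lt (by linarith) hN0).const_mul C
  have hval_maj : ∫ t in Set.Ioi N, C * t ^ (1 - β) = C * (N ^ (2 - β) / (β - 2)) := by
    rw [MeasureTheory.integral_const_mul, integral_Ioi_rpow_of_lt (by linarith) hN0]
    have h2 : (1 - β) + 1 = 2 - β := by ring
    rw [h2]
    have hb2 : β - 2 ≠ 0 := by linarith
    have h2b : 2 - β ≠ 0 := by linarith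
    field_simp
    ring
  -- measurability of t ψ t on Ioi N
  have hmeas : AEStronglyMeasurable (fun t => t * ψ t) (volume.restrict (Set.Ioi N)) := by
    apply ContinuousOn.aestronglyMeasurable _ measurableSet_Ioi
    intro t ht
    exact (continuousAt_id.mul (hderiv t (hN1.trans ht.le)).continuousAt).continuousWithinAt
  -- integrability of t ψ t
  have hInt : IntegrableOn (fun t => t * ψ t) (Set.Ioi N) := by
    apply Integrable.mono' hint_maj hmeas
    filter_upwards [ae_restrict_mem measurableSet_Ioi] with t ht
    have ht' : N ≤ t := ht.le
    rw [Real.norm_eq_abs, abs_of_nonneg (mul_nonneg (hN0.trans_le ht').le (hψt t ht').le)]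
    exact hmaj t ht'
  -- the minorant and its integral
  have hder_F : ∀ t ∈ Set.Ici N, HasDerivAt
      (fun t => -((L * t + L ^ 2) * Real.exp (-((t - N) / L))))
      (t * Real.exp (-((t - N) / L))) t := by
    intro t _
    have h1 : HasDerivAt (fun t : ℝ => Real.exp (-((t - N) / L)))
        (Real.exp (-((t - N) / L)) * (-(1 / L))) t := by
      have := ((((hasDerivAt_id t).sub_const N).div_const L).neg).exp
      simpa using this
    have h2 : HasDerivAt (fun t : ℝ => L * t + L ^ 2) L t := by
      simpa using ((hasDerivAt_id t).const_mul L).add_const (L ^ 2)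
    have h3 : HasDerivAt (fun t => -((L * t + L ^ 2) * Real.exp (-((t - N) / L))))
        (-(L * Real.exp (-((t - N) / L)) + (L * t + L ^ 2) * (Real.exp (-((t - N) / L)) * -(1 / L)))) t :=
      (h2.mul h1).neg
    convert h3 using 1
    have hL : L * (1 / L) = 1 := mul_one_div_cancel hL0.ne'
    linear_combination (-(t + L) * Real.exp (-((t - N) / L))) * hL
  have hF_tendsto : Tendsto (fun t => -((L * t + L ^ 2) * Real.exp (-((t - N) / L))))
      atTop (nhds 0) := by
    have harg : Tendsto (fun t : ℝ => (t - N) / L) atTop atTop :=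
      (tendsto_atTop_add_const_right _ (-N) tendsto_id).atTop_div_const hL0
    have hmain : Tendsto (fun u : ℝ => (L ^ 2 * u + (L * N + L ^ 2)) * Real.exp (-u))
        atTop (nhds 0) := by
      have h1 : Tendsto (fun u : ℝ => u * Real.exp (-u)) atTop (nhds 0) := by
        simpa using tendsto_pow_mul_exp_neg_atTop_nhds_zero 1
      have h2 : Tendsto (fun u : ℝ => Real.exp (-u)) atTop (nhds 0) := by
        simpa using Real.tendsto_exp_neg_atTop_nhds_zero
      have := (h1.const_mul (L ^ 2)).add (h2.const_mul (L * N + L ^ 2))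
      simp only [mul_zero, add_zero] at this
      convert this using 2 with u
      ring
    have hcomp := hmain.comp harg
    have heq : (fun u : ℝ => (L ^ 2 * u + (L * N + L ^ 2)) * Real.exp (-u)) ∘
        (fun t : ℝ => (t - N) / L) = fun t => (L * t + L ^ 2) * Real.exp (-((t - N) / L)) := by
      funext t
      simp only [Function.comp_apply]
      congr 1
      field_simp
      ring
    rw [heq] at hcomp
    simpa using hcomp.neg
  have hmin_nonneg : ∀ t ∈ Set.Ioi N, 0 ≤ t * Real.exp (-((t - N) / L)) := by
    intro t ht
    have : (0:ℝ) < t := lt_trans hN0 ht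
    positivity
  have hint_min : IntegrableOn (fun t => t * Real.exp (-((t - N) / L))) (Set.Ioi N) :=
    integrableOn_Ioi_deriv_of_nonneg' hder_F hmin_nonneg hF_tendsto
  have hval_min : ∫ t in Set.Ioi N, t * Real.exp (-((t - N) / L)) = L * N + L ^ 2 := by
    rw [integral_Ioi_of_hasDerivAt_of_nonneg' hder_F hmin_nonneg hF_tendsto]
    simp [Real.exp_zero]
  -- assemble
  have hIci : (∫ t in Set.Ici N, t * ψ t) = ∫ t in Set.Ioi N, t * ψ t :=
    MeasureTheory.integral_Ici_eq_integral_Ioi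
  have hlower : N * ψ N * L ≤ ∫ t in Set.Ioi N, t * ψ t := by
    have h1 : ∫ t in Set.Ioi N, ψ N * (t * Real.exp (-((t - N) / L)))
        ≤ ∫ t in Set.Ioi N, t * ψ t := by
      apply setIntegral_mono_on (hint_min.const_mul (ψ N)) hInt measurableSet_Ioi
      intro t ht
      have ht' : N ≤ t := ht.le
      have ht0 : (0:ℝ) < t := lt_of_lt_of_le hN0 ht'
      have := hB t ht'
      calc ψ N * (t * Real.exp (-((t - N) / L)))
          = t * (ψ N * Real.exp (-((t - N) / L))) := by ring
        _ ≤ t * ψ t := mul_le_mul_of_nonneg_left this ht0.le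
    rw [MeasureTheory.integral_const_mul, hval_min] at h1
    nlinarith [h1, mul_pos hψN (mul_pos hL0 hL0)]
  have hupper : (∫ t in Set.Ioi N, t * ψ t) ≤ N * ψ N * L * (1 + 4 * a) := by
    have h1 : (∫ t in Set.Ioi N, t * ψ t) ≤ ∫ t in Set.Ioi N, C * t ^ (1 - β) := by
      apply setIntegral_mono_on hInt hint_maj measurableSet_Ioi
      intro t ht
      exact hmaj t ht.le
    rw [hval_maj] at h1
    have hpow : N ^ β * N ^ (2 - β) = N ^ (2:ℝ) := by
      rw [← Real.rpow_add hN0]; norm_num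
    have hCval : C * (N ^ (2 - β) / (β - 2)) = N ^ (2:ℝ) * ψ N / (β - 2) := by
      calc C * (N ^ (2 - β) / (β - 2)) = (N ^ β * N ^ (2 - β)) * ψ N / (β - 2) := by
            rw [hCdef]; ring
        _ = N ^ (2:ℝ) * ψ N / (β - 2) := by rw [hpow]
    rw [hCval] at h1
    have hN2 : N ^ (2:ℝ) = N ^ 2 := by
      rw [show (2:ℝ) = ((2:ℕ):ℝ) by norm_num, Real.rpow_natCast]
    rw [hN2] at h1
    -- now show N^2 ψN / (β - 2) ≤ N ψN L (1 + 4a) = N^2 ψN a (1+4a)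
    have hfin : N ^ 2 * ψ N / (β - 2) ≤ N * ψ N * L * (1 + 4 * a) := by
      rw [hLa]
      have hβ2 : (0:ℝ) < β - 2 := by linarith
      rw [div_le_iff₀ hβ2]
      have ha14 : a ≤ 1 / 4 := hα
      -- (1+4a) a (β-2) ≥ 1 given aβ = 1, 0 < a ≤ 1/4
      have key : 1 ≤ (1 + 4 * a) * (a * (β - 2)) := by
        have hab : a * (β - 2) = 1 - 2 * a := by linear_combination haβ
        rw [hab]
        nlinarith [ha14, ha0]
      have hNψ : 0 < N ^ 2 * ψ N := by positivity
      nlinarith [mul_le_mul_of_nonneg_left key hNψ.le]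
    linarith
  refine ⟨?_, ?_, ?_⟩
  · rw [integrableOn_Ici_iff_integrableOn_Ioi]
    exact hInt
  · rw [hIci]; exact hlower
  · rw [hIci]; exact hupper
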